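/- Let S be a monoid. Let RIFP be the class of S-acts that are retracts of coproducts of finitely presented S-acts, let U_FP be the class of unitary S-monomorphisms f : X → Y such that Y∖im(f) ∈ RIFP, and let PE be the class of pure S-epimorphisms. Then (U_FP, PE) is a weak factorization system. -/

import Mathlib

universe u

/-- A right `S`-act: a set with a right action of the monoid `S`. -/
structure SAct (S : Type u) [Monoid S] : Type (u + 1) where
  carrier : Type u
  act : carrier → S → carrier
  act_one : ∀ a, act a 1 = a
  act_mul : ∀ a s t, act (act a s) t = act a (s * t)

/-- A map of right `S`-acts. -/
structure SMap {S : Type u} [Monoid S] (A B : SAct S) : Type u where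
  toFun : A.carrier → B.carrier
  map_act : ∀ a s, toFun (A.act a s) = B.act (toFun a) s

namespace SMap

variable {S : Type u} [Monoid S]

/-- Composition of `S`-maps. -/
def comp {A B C : SAct S} (g : SMap B C) (f : SMap A B) : SMap A C :=
  ⟨fun a => g.toFun (f.toFun a), fun a s => by
    show g.toFun (f.toFun (A.act a s)) = C.act (g.toFun (f.toFun a)) s
    rw [f.map_act, g.map_act]⟩

/-- The identity `S`-map. -/
def id (A : SAct S) : SMap A A := ⟨fun a => a, fun _ _ => rfl⟩

end SMap

variable {S : Type u} [Monoid S]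

/-- `f` has the left lifting property with respect to `g` (equivalently, `g` has the
right lifting property with respect to `f`). -/
def Lifts {A B C D : SAct S} (f : SMap A B) (g : SMap C D) : Prop :=
  ∀ (u : SMap A C) (v : SMap B D), g.comp u = v.comp f →
    ∃ h : SMap B C, h.comp f = u ∧ g.comp h = v

/-- A class of `S`-maps. -/
def MapClass (S : Type u) [Monoid S] : Type (u + 1) :=
  ∀ {A B : SAct S}, SMap A B → Prop

/-- `C^□`: the class of maps with the right lifting property with respect to every map of `C`. -/
def rlpC (C : MapClass S) : MapClass S :=
  fun {_ _} g => ∀ {A B : SAct S} (f : SMap A B), C f → Lifts f g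

/-- `□C`: the class of maps with the left lifting property with respect to every map of `C`. -/
def llpC (C : MapClass S) : MapClass S :=
  fun {_ _} f => ∀ {C' D : SAct S} (g : SMap C' D), C g → Lifts f g

/-- `cof(C) = □(C^□)`. -/
def cofC (C : MapClass S) : MapClass S := llpC (rlpC C)

/-- `fib(C) = (□C)^□`. -/
def fibC (C : MapClass S) : MapClass S := rlpC (llpC C)

/-- `(L, R)` is a weak factorization system. -/
structure IsWFS (L R : MapClass S) : Prop where
  rlp_eq : ∀ {A B : SAct S} (g : SMap A B), R g ↔ rlpC L g
  llp_eq : ∀ {A B : SAct S} (f : SMap A B), L f ↔ llpC R f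
  factor : ∀ {A B : SAct S} (h : SMap A B),
    ∃ (C : SAct S) (f : SMap A C) (g : SMap C B), L f ∧ R g ∧ g.comp f = h

/-- `g : A → C` is a retract of `f : A → B`:  there are `α : C → B`, `β : B → C` with
`β ∘ α = 1`, `α ∘ g = f` and `β ∘ f = g`. -/
def RetractOfMap {A B C : SAct S} (g : SMap A C) (f : SMap A B) : Prop :=
  ∃ (α : SMap C B) (β : SMap B C),
    β.comp α = SMap.id C ∧ α.comp g = f ∧ β.comp f = g

/-- The square with sides `f : A → B`, `u : A → X`, `fbar : X → P`, `v : B → P` is a pushout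
square (i.e. `fbar` is the pushout of `f` along `u`). -/
structure IsPushoutSq {A B X P : SAct S}
    (f : SMap A B) (u : SMap A X) (fbar : SMap X P) (v : SMap B P) : Prop where
  comm : fbar.comp u = v.comp f
  ue : ∀ ⦃Q : SAct S⦄ (g' : SMap X Q) (v' : SMap B Q), g'.comp u = v'.comp f →
    ∃! k : SMap P Q, k.comp fbar = g' ∧ k.comp v = v'

/-- The square with sides `pr1 : P → D`, `pr2 : P → A`, `g : A → B`, `v : D → B` is a
pullback square (i.e. `pr1` is the pullback of `g` along `v`). -/
structure IsPullbackSq {P A D B : SAct S}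
    (pr1 : SMap P D) (pr2 : SMap P A) (g : SMap A B) (v : SMap D B) : Prop where
  comm : g.comp pr2 = v.comp pr1
  ue : ∀ ⦃Q : SAct S⦄ (q1 : SMap Q D) (q2 : SMap Q A), g.comp q2 = v.comp q1 →
    ∃! k : SMap Q P, pr1.comp k = q1 ∧ pr2.comp k = q2

/-- `f` is an isomorphism of `S`-acts. -/
def IsIsoMap {A B : SAct S} (f : SMap A B) : Prop :=
  ∃ g : SMap B A, g.comp f = SMap.id A ∧ f.comp g = SMap.id B

/-- A directed system of `S`-acts indexed by the ordinals `< lam`. -/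
structure OSeq (S : Type u) [Monoid S] (lam : Ordinal.{u}) where
  obj : ∀ a : Ordinal.{u}, a < lam → SAct S
  map : ∀ (a b : Ordinal.{u}) (hab : a ≤ b) (hb : b < lam),
    SMap (obj a (lt_of_le_of_lt hab hb)) (obj b hb)
  map_id : ∀ (a : Ordinal.{u}) (ha : a < lam), map a a le_rfl ha = SMap.id (obj a ha)
  map_comp : ∀ (a b c : Ordinal.{u}) (hab : a ≤ b) (hbc : b ≤ c) (hc : c < lam),
    (map b c hbc hc).comp (map a b hab (lt_of_le_of_lt hbc hc)) = map a c (le_trans hab hbc) hc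

/-- A cocone over a directed system of `S`-acts indexed by ordinals `< lam`. -/
structure OCocone {lam : Ordinal.{u}} (F : OSeq S lam) where
  pt : SAct S
  ι : ∀ (a : Ordinal.{u}) (ha : a < lam), SMap (F.obj a ha) pt
  fac : ∀ (a b : Ordinal.{u}) (hab : a ≤ b) (hb : b < lam),
    (ι b hb).comp (F.map a b hab hb) = ι a (lt_of_le_of_lt hab hb)

/-- A cocone is a (directed) colimit if it satisfies the universal property. -/
def IsColimitO {lam : Ordinal.{u}} {F : OSeq S lam} (c : OCocone F) : Prop :=
  ∀ d : OCocone F, ∃! k : SMap c.pt d.pt, ∀ (a : Ordinal.{u}) (ha : a < lam),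
    k.comp (c.ι a ha) = d.ι a ha

/-- Restriction of a directed system to the ordinals `< γ`. -/
def OSeq.restrict {lam : Ordinal.{u}} (F : OSeq S lam) (γ : Ordinal.{u}) (hγ : γ ≤ lam) :
    OSeq S γ where
  obj a ha := F.obj a (lt_of_lt_of_le ha hγ)
  map a b hab hb := F.map a b hab (lt_of_lt_of_le hb hγ)
  map_id a ha := F.map_id a _
  map_comp a b c hab hbc hc := F.map_comp a b c hab hbc _

/-- The cocone over the restriction to `γ` with vertex `F.obj γ`. -/
def OSeq.coconeAt {lam : Ordinal.{u}} (F : OSeq S lam) (γ : Ordinal.{u}) (hγ : γ < lam) :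
    OCocone (F.restrict γ hγ.le) where
  pt := F.obj γ hγ
  ι a ha := F.map a γ ha.le hγ
  fac a b hab hb := F.map_comp a b γ hab hb.le hγ

/-- A `λ`-sequence: a directed system of `S`-acts indexed by the ordinals `< λ`, together
with a directed colimit, which is continuous at every limit ordinal `γ ≤ λ`. -/
structure LambdaSequence (S : Type u) [Monoid S] (lam : Ordinal.{u}) where
  seq : OSeq S lam
  cocone : OCocone seq
  isColimit : IsColimitO cocone
  continuity : ∀ (γ : Ordinal.{u}) (hγ : γ < lam), Order.IsSuccLimit γ →
    IsColimitO (seq.coconeAt γ hγ)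

/-- An ordinal `lam` is `γ`-filtered: it is a limit ordinal and every subset of `lam` of
cardinality at most `γ` has supremum `< lam`. -/
def IsGammaFiltered (γ : Cardinal.{u}) (lam : Ordinal.{u}) : Prop :=
  Order.IsSuccLimit lam ∧ ∀ A : Set Ordinal.{u}, A ⊆ Set.Iio lam →
    Cardinal.mk A ≤ Cardinal.lift.{u + 1} γ → sSup A < lam

/-- A split monomorphism. -/
def SplitMonoM {A B : SAct S} (f : SMap A B) : Prop :=
  ∃ γ : SMap B A, γ.comp f = SMap.id A

/-- A split epimorphism. -/
def SplitEpiM {A B : SAct S} (f : SMap A B) : Prop :=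
  ∃ γ : SMap B A, f.comp γ = SMap.id B

/-- A unitary monomorphism of `S`-acts. -/
def IsUnitaryMono {X Y : SAct S} (f : SMap X Y) : Prop :=
  Function.Injective f.toFun ∧
    ∀ (y : Y.carrier) (s : S), Y.act y s ∈ Set.range f.toFun → y ∈ Set.range f.toFun

/-- The class of unitary monomorphisms. -/
def UnitaryClass (S : Type u) [Monoid S] : MapClass S := fun {_ _} f => IsUnitaryMono f

/-- The class of split epimorphisms. -/
def SplitEpiClass (S : Type u) [Monoid S] : MapClass S := fun {_ _} f => SplitEpiM f

/-- `P` is projective with respect to the map `f : A → B`. -/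
def ProjWrt (P : SAct S) {A B : SAct S} (f : SMap A B) : Prop :=
  ∀ g : SMap P B, ∃ h : SMap P A, f.comp h = g

/-- `Q` is a retract of the act `P`. -/
def ActRetract (Q P : SAct S) : Prop :=
  ∃ (α : SMap Q P) (β : SMap P Q), β.comp α = SMap.id Q

/-- The coproduct (disjoint union) of two `S`-acts. -/
def SAct.coprod (A B : SAct S) : SAct S where
  carrier := A.carrier ⊕ B.carrier
  act x s := Sum.elim (fun a => Sum.inl (A.act a s)) (fun b => Sum.inr (B.act b s)) x
  act_one x := by cases x <;> simp [SAct.act_one]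
  act_mul x s t := by cases x <;> simp [SAct.act_mul]

/-- The coproduct (disjoint union) of a family of `S`-acts. -/
def SAct.sigmaCoprod {ι : Type u} (F : ι → SAct S) : SAct S where
  carrier := Σ i, (F i).carrier
  act x s := ⟨x.1, (F x.1).act x.2 s⟩
  act_one x := by cases x with | mk i a => exact congrArg (Sigma.mk i) ((F i).act_one a)
  act_mul x s t := by cases x with | mk i a => exact congrArg (Sigma.mk i) ((F i).act_mul a s t)

/-- The coproduct of a family of `S`-maps. -/
def coprodMap {ι : Type u} {A B : ι → SAct S} (f : ∀ i, SMap (A i) (B i)) :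
    SMap (SAct.sigmaCoprod A) (SAct.sigmaCoprod B) where
  toFun x := ⟨x.1, (f x.1).toFun x.2⟩
  map_act x s := congrArg (Sigma.mk x.1) ((f x.1).map_act x.2 s)

/-- An isomorphism class predicate: `A` and `B` are isomorphic `S`-acts. -/
def ActIso (A B : SAct S) : Prop := ∃ f : SMap A B, Function.Bijective f.toFun

/-- `B` is a direct summand of `A`. -/
def IsDirectSummand (B A : SAct S) : Prop := ∃ C : SAct S, ActIso (SAct.coprod B C) A

/-- The subact of `Y` on a subset `T` closed under the action. -/
def SAct.sub (Y : SAct S) (T : Set Y.carrier) (hT : ∀ t ∈ T, ∀ s : S, Y.act t s ∈ T) :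
    SAct S where
  carrier := {y // y ∈ T}
  act t s := ⟨Y.act t.1 s, hT t.1 t.2 s⟩
  act_one t := Subtype.ext (Y.act_one t.1)
  act_mul t s r := Subtype.ext (Y.act_mul t.1 s r)

/-- A class of `S`-acts. -/
def ActClass (S : Type u) [Monoid S] : Type (u + 1) := SAct S → Prop

/-- The class `R_X` of maps with respect to which every act of `X` is projective. -/
def RXClass (𝒳 : ActClass S) : MapClass S :=
  fun {_ _} f => ∀ P : SAct S, 𝒳 P → ProjWrt P f

/-- The class `U_X` of unitary monomorphisms `f : X → Y` with `Y ∖ im f ∈ X`. -/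
def UXClass (𝒳 : ActClass S) : MapClass S :=
  fun {_ Y} f =>
    ∃ (_ : Function.Injective f.toFun)
      (hu : ∀ (y : Y.carrier) (s : S),
        Y.act y s ∈ Set.range f.toFun → y ∈ Set.range f.toFun),
      𝒳 (Y.sub (Set.range f.toFun)ᶜ (fun t ht s hmem => ht (hu t s hmem)))

/-- Every `S`-act has an `𝒳`-precover. -/
def HasPrecover (𝒳 : ActClass S) (A : SAct S) : Prop :=
  ∃ (P : SAct S) (g : SMap P A), 𝒳 P ∧
    ∀ ⦃P' : SAct S⦄ (g' : SMap P' A), 𝒳 P' → ∃ f : SMap P' P, g.comp f = g'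

/-- A projective `S`-act. -/
def ProjectiveAct (P : SAct S) : Prop :=
  ∀ ⦃A B : SAct S⦄ (f : SMap A B), Function.Surjective f.toFun → ProjWrt P f

/-- The class of all surjective `S`-maps (epimorphisms). -/
def EpiClass (S : Type u) [Monoid S] : MapClass S :=
  fun {_ _} f => Function.Surjective f.toFun

/-- The free `S`-act on `n` generators. -/
def freeAct (S : Type u) [Monoid S] (n : ℕ) : SAct S where
  carrier := Fin n × S
  act p s := (p.1, p.2 * s)
  act_one p := by simp
  act_mul p s t := by simp [mul_assoc]

/-- `r` is a congruence on the `S`-act `A`. -/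
def IsCong (A : SAct S) (r : A.carrier → A.carrier → Prop) : Prop :=
  Equivalence r ∧ ∀ (a b : A.carrier) (s : S), r a b → r (A.act a s) (A.act b s)

/-- A finitely presented `S`-act: a quotient of a finitely generated free act by a
finitely generated congruence. -/
def FinPresented (M : SAct S) : Prop :=
  ∃ (n : ℕ) (q : SMap (freeAct S n) M), Function.Surjective q.toFun ∧
    ∃ (m : ℕ) (p : Fin m → (freeAct S n).carrier × (freeAct S n).carrier),
      (∀ i, q.toFun (p i).1 = q.toFun (p i).2) ∧
      ∀ r : (freeAct S n).carrier → (freeAct S n).carrier → Prop, IsCong (freeAct S n) r →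
        (∀ i, r (p i).1 (p i).2) →
        ∀ x y, q.toFun x = q.toFun y → r x y

/-- A pure epimorphism of `S`-acts. -/
def IsPureEpi {X Y : SAct S} (ψ : SMap X Y) : Prop :=
  Function.Surjective ψ.toFun ∧
    ∀ (M : SAct S), FinPresented M → ∀ f : SMap M Y, ∃ g : SMap M X, ψ.comp g = f

/-- The class of retracts of coproducts of finitely presented acts. -/
def RIFPClass (S : Type u) [Monoid S] : ActClass S :=
  fun A => ∃ (ι : Type u) (F : ι → SAct S),
    (∀ i, FinPresented (F i)) ∧ ActRetract A (SAct.sigmaCoprod F)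

/-- The one-element `S`-act. -/
def oneAct (S : Type u) [Monoid S] : SAct S :=
  ⟨PUnit, fun _ _ => PUnit.unit, fun _ => rfl, fun _ _ _ => rfl⟩

/-- The unique map to the one-element act. -/
def bangMap (A : SAct S) : SMap A (oneAct S) := ⟨fun _ => PUnit.unit, fun _ _ => rfl⟩

/-- The monoid `S` as a right `S`-act. -/
def regAct (S : Type u) [Monoid S] : SAct S := ⟨S, fun a s => a * s, mul_one, mul_assoc⟩

/-- The set of fixed points of an `S`-act. -/
def FixSet (A : SAct S) : Set A.carrier := {a | ∀ s : S, A.act a s = a}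

/-- The Rees quotient of `Y` collapsing the subset `T` (closed under the action) to a point. -/
def reesQuot (Y : SAct S) (T : Set Y.carrier) (hT : ∀ t ∈ T, ∀ s : S, Y.act t s ∈ T) :
    SAct S where
  carrier := Quot (fun a b => a = b ∨ (a ∈ T ∧ b ∈ T))
  act q s := Quot.lift (fun y => Quot.mk _ (Y.act y s))
    (fun a b hab => by
      rcases hab with h | ⟨ha, hb⟩
      · rw [h]
      · exact Quot.sound (Or.inr ⟨hT a ha s, hT b hb s⟩)) q
  act_one q := by
    induction q using Quot.ind with
    | _ y => exact congrArg (Quot.mk _) (Y.act_one y)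
  act_mul q s t := by
    induction q using Quot.ind with
    | _ y => exact congrArg (Quot.mk _) (Y.act_mul y s t)

/-- The class of monomorphisms whose Rees quotient lies in `𝒳`. -/
def XMonoClass (𝒳 : ActClass S) : MapClass S :=
  fun {X Y} f =>
    Function.Injective f.toFun ∧
      𝒳 (reesQuot Y (Set.range f.toFun)
        (fun t ht s => by
          obtain ⟨x, rfl⟩ := ht
          exact ⟨X.act x s, f.map_act x s⟩))

/-- The type of all `S`-maps (arrows). -/
def ArrowCls (S : Type u) [Monoid S] : Type (u + 1) := Σ (A B : SAct S), SMap A B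

/-- The class of pushouts of maps in `𝒞`. -/
def pushoutsOf (𝒞 : MapClass S) : MapClass S :=
  fun {X P} fbar => ∃ (A B : SAct S) (f : SMap A B) (u : SMap A X) (v : SMap B P),
    𝒞 f ∧ IsPushoutSq f u fbar v

/-- `h` is a transfinite composition of maps in `𝒟`. -/
def IsTransfiniteCompOf (𝒟 : MapClass S) {A L : SAct S} (h : SMap A L) : Prop :=
  ∃ (lam : Ordinal.{u}), Ordinal.omega0 ≤ lam ∧
    ∃ (Φ : LambdaSequence S lam) (h0 : (0 : Ordinal.{u}) < lam),
      (∀ (b : Ordinal.{u}) (hb : b + 1 < lam),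
        𝒟 (Φ.seq.map b (b + 1) (le_self_add : b ≤ b + 1) hb)) ∧
      Φ.seq.obj 0 h0 = A ∧ Φ.cocone.pt = L ∧ HEq (Φ.cocone.ι 0 h0) h

/-- `ret(𝒞)`: retracts of transfinite compositions of pushouts of maps in `𝒞`. -/
def retClass (𝒞 : MapClass S) : MapClass S :=
  fun {A _} g => ∃ (B : SAct S) (f : SMap A B),
    IsTransfiniteCompOf (pushoutsOf 𝒞) f ∧ RetractOfMap g f

/-- The class of pure epimorphisms. -/
def PureEpiClass (S : Type u) [Monoid S] : MapClass S := fun {_ _} f => IsPureEpi f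

/-- The subact `{z}` of `S`, for a left zero `z`. -/
def zSub (z : S) (hz : ∀ s : S, z * s = z) : SAct S :=
  (regAct S).sub {z} (fun t ht s => by
    have ht' : (t : S) = z := ht
    show @HMul.hMul S S S _ t s = z
    exact (congrArg (fun x : S => x * s) ht').trans (hz s))

/-- The inclusion `{z} → S`, for a left zero `z`. -/
def zIncl (z : S) (hz : ∀ s : S, z * s = z) : SMap (zSub z hz) (regAct S) :=
  ⟨fun t => t.1, fun _ _ => rfl⟩

/-- The subact `K_d = g⁻¹(d)` of `C`, for a fixed point `d` of `D`. -/
def kerAct {C D : SAct S} (g : SMap C D) (d : D.carrier) (hd : d ∈ FixSet D) : SAct S :=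
  C.sub {c | g.toFun c = d} (fun c hc s => by
    simp only [Set.mem_setOf_eq] at hc ⊢
    rw [g.map_act, hc]
    exact hd s)

/-- A centred `S`-act: an act with exactly one fixed point. -/
def CAct (S : Type u) [Monoid S] : Type (u + 1) :=
  {A : SAct S // ∃! a : A.carrier, ∀ s : S, A.act a s = a}

/-- A class of maps of centred `S`-acts. -/
abbrev MapClassC (S : Type u) [Monoid S] : Type (u + 1) :=
  ∀ (A B : CAct S), SMap A.1 B.1 → Prop

/-- `C^□` in the category of centred `S`-acts. -/
def rlpCC (𝒞 : MapClassC S) : MapClassC S :=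
  fun _ _ g => ∀ (X Y : CAct S) (f : SMap X.1 Y.1), 𝒞 X Y f → Lifts f g

/-- `□C` in the category of centred `S`-acts. -/
def llpCC (𝒞 : MapClassC S) : MapClassC S :=
  fun _ _ f => ∀ (X Y : CAct S) (g : SMap X.1 Y.1), 𝒞 X Y g → Lifts f g

/-- A weak factorization system in the category of centred `S`-acts. -/
structure IsWFSC (L R : MapClassC S) : Prop where
  rlp_eq : ∀ (A B : CAct S) (g : SMap A.1 B.1), R A B g ↔ rlpCC L A B g
  llp_eq : ∀ (A B : CAct S) (f : SMap A.1 B.1), L A B f ↔ llpCC R A B f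
  factor : ∀ (A B : CAct S) (h : SMap A.1 B.1),
    ∃ (C : CAct S) (f : SMap A.1 C.1) (g : SMap C.1 B.1), L A C f ∧ R C B g ∧ g.comp f = h

/-- The one-element centred `S`-act `0`. -/
def oneCAct (S : Type u) [Monoid S] : CAct S :=
  ⟨oneAct S, PUnit.unit, fun _ => rfl, fun _ _ => rfl⟩

/-- The unique map `0 → X` of centred `S`-acts. -/
noncomputable def zeroTo (X : CAct S) : SMap (oneCAct S).1 X.1 :=
  ⟨fun _ => X.2.choose, fun _ s => (X.2.choose_spec.1 s).symm⟩

/-! ### Auxiliary machinery for Theorem 13 -/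

section Aux13

theorem smap_ext {A B : SAct S} {f g : SMap A B} (h : ∀ a, f.toFun a = g.toFun a) : f = g := by
  cases f with
  | mk ff hf =>
    cases g with
    | mk gg hg =>
      have h2 : ff = gg := funext h
      subst h2
      rfl

/-- Presentation data: number of generators, number of relations, the relations. -/
def PData (S : Type u) [Monoid S] : Type u :=
  Σ (n : ℕ) (m : ℕ), Fin m → ((freeAct S n).carrier × (freeAct S n).carrier)

/-- One-step relation generated by the relation data (closed under the action). -/
def pstep (d : PData S) : (freeAct S d.1).carrier → (freeAct S d.1).carrier → Prop :=
  fun a b => ∃ (i : Fin d.2.1) (s : S),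
    a = (freeAct S d.1).act (d.2.2 i).1 s ∧ b = (freeAct S d.1).act (d.2.2 i).2 s

theorem pstep_act {d : PData S} {a b : (freeAct S d.1).carrier} (h : pstep d a b) (s : S) :
    pstep d ((freeAct S d.1).act a s) ((freeAct S d.1).act b s) := by
  obtain ⟨i, t, rfl, rfl⟩ := h
  exact ⟨i, t * s, ((freeAct S d.1).act_mul _ _ _), ((freeAct S d.1).act_mul _ _ _)⟩

/-- The standard finitely presented act determined by presentation data. -/
def Md (d : PData S) : SAct S where
  carrier := Quot (pstep d)
  act x s := Quot.lift (fun a => Quot.mk _ ((freeAct S d.1).act a s))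
    (fun a b h => Quot.sound (pstep_act h s)) x
  act_one x := by
    induction x using Quot.ind with
    | _ a => exact congrArg (Quot.mk _) ((freeAct S d.1).act_one a)
  act_mul x s t := by
    induction x using Quot.ind with
    | _ a => exact congrArg (Quot.mk _) ((freeAct S d.1).act_mul a s t)

def mdMk (d : PData S) : SMap (freeAct S d.1) (Md d) := ⟨Quot.mk _, fun _ _ => rfl⟩

theorem md_fp (d : PData S) : FinPresented (Md d) := by
  refine ⟨d.1, mdMk d, ?_, d.2.1, d.2.2, ?_, ?_⟩
  · intro x
    induction x using Quot.ind with
    | _ a => exact ⟨a, rfl⟩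
  · intro i
    exact Quot.sound ⟨i, 1, ((freeAct S d.1).act_one _).symm, ((freeAct S d.1).act_one _).symm⟩
  · intro r hr hp x y hxy
    have h := Quot.eq.1 hxy
    clear hxy
    induction h with
    | rel a b hab =>
      obtain ⟨i, s, rfl, rfl⟩ := hab
      exact hr.2 _ _ s (hp i)
    | refl a => exact hr.1.refl a
    | symm a b _ ih => exact hr.1.symm ih
    | trans a b c _ _ ih1 ih2 => exact hr.1.trans ih1 ih2

/-- Every finitely presented act is a retract (in fact iso) of a standard one. -/
theorem fp_retract_md {M : SAct S} (hM : FinPresented M) :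
    ∃ (d : PData S) (φ : SMap (Md d) M) (ψ : SMap M (Md d)), φ.comp ψ = SMap.id M := by
  obtain ⟨n, q, hq, m, p, hrel, huniv⟩ := hM
  refine ⟨⟨n, m, p⟩, ?_⟩
  have hker : ∀ a b, q.toFun a = q.toFun b →
      Quot.mk (pstep (⟨n, m, p⟩ : PData S)) a = Quot.mk _ b := by
    intro a b hab
    refine huniv (fun a b => Quot.mk (pstep (⟨n, m, p⟩ : PData S)) a = Quot.mk _ b)
      ⟨⟨fun _ => rfl, fun h => h.symm, fun h1 h2 => h1.trans h2⟩, ?_⟩ ?_ a b hab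
    · intro a b s h
      exact congrArg (fun x => (Md (⟨n, m, p⟩ : PData S)).act x s) h
    · intro i
      exact Quot.sound ⟨i, 1, ((freeAct S n).act_one _).symm, ((freeAct S n).act_one _).symm⟩
  have hsound : ∀ a b, pstep (⟨n, m, p⟩ : PData S) a b → q.toFun a = q.toFun b := by
    intro a b hab
    obtain ⟨i, s, rfl, rfl⟩ := hab
    rw [q.map_act, q.map_act, hrel i]
  refine ⟨⟨Quot.lift q.toFun hsound, ?_⟩,
    ⟨fun y => Quot.mk _ (Classical.choose (hq y)), ?_⟩, ?_⟩
  · intro a s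
    induction a using Quot.ind with
    | _ a => exact q.map_act a s
  · intro y s
    apply hker
    rw [Classical.choose_spec (hq (M.act y s)), q.map_act, Classical.choose_spec (hq y)]
  · apply smap_ext
    intro y
    exact Classical.choose_spec (hq y)

/-- Every element of every act is covered by a map from a standard f.p. act. -/
theorem md_cover (Z : SAct S) (z : Z.carrier) :
    ∃ (d : PData S) (w : SMap (Md d) Z) (c : (Md d).carrier), w.toFun c = z := by
  refine ⟨⟨1, 0, Fin.elim0⟩,
    ⟨Quot.lift (fun a => Z.act z a.2) (fun a b h => by
      obtain ⟨i, _, _, _⟩ := h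
      exact i.elim0), ?_⟩, Quot.mk _ (0, 1), Z.act_one z⟩
  · intro x s
    induction x using Quot.ind with
    | _ a => exact (Z.act_mul z a.2 s).symm

/- Coproduct inclusion and sigma plumbing -/
def inlM (X E : SAct S) : SMap X (X.coprod E) := ⟨Sum.inl, fun _ _ => rfl⟩

def evalIdx (Z : SAct S) : Type u := Σ d : PData S, SMap (Md d) Z

def evalFam (Z : SAct S) : evalIdx Z → SAct S := fun i => Md i.1

def evalMap (Z : SAct S) : SMap (SAct.sigmaCoprod (evalFam Z)) Z :=
  ⟨fun x => x.1.2.toFun x.2, fun x s => x.1.2.map_act x.2 s⟩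

noncomputable def rangeInv {X Y : SAct S} (f : SMap X Y) (y : Y.carrier)
    (hy : y ∈ Set.range f.toFun) : X.carrier := (Set.mem_range.mp hy).choose

theorem rangeInv_spec {X Y : SAct S} (f : SMap X Y) (y : Y.carrier)
    (hy : y ∈ Set.range f.toFun) : f.toFun (rangeInv f y hy) = y :=
  (Set.mem_range.mp hy).choose_spec

theorem range_act {X Y : SAct S} (f : SMap X Y) (y : Y.carrier) (s : S)
    (hy : y ∈ Set.range f.toFun) : Y.act y s ∈ Set.range f.toFun := by
  obtain ⟨x, rfl⟩ := hy
  exact ⟨X.act x s, f.map_act x s⟩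

theorem rangeInv_act {X Y : SAct S} (f : SMap X Y) (hinj : Function.Injective f.toFun)
    (y : Y.carrier) (s : S) (hy : y ∈ Set.range f.toFun)
    (hys : Y.act y s ∈ Set.range f.toFun) :
    rangeInv f (Y.act y s) hys = X.act (rangeInv f y hy) s := by
  apply hinj
  rw [rangeInv_spec, f.map_act, rangeInv_spec]

/-- Step A pure epi: `[f, eval] : X ⊔ (⨿ f.p. acts over Y) → Y`. -/
def pA {X Y : SAct S} (f : SMap X Y) :
    SMap (X.coprod (SAct.sigmaCoprod (evalFam Y))) Y :=
  ⟨Sum.elim f.toFun (evalMap Y).toFun, by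
    intro a s
    cases a with
    | inl x => exact f.map_act x s
    | inr e => exact (evalMap Y).map_act e s⟩

theorem pA_pure {X Y : SAct S} (f : SMap X Y) : IsPureEpi (pA f) := by
  constructor
  · intro y
    obtain ⟨d, w, c, hc⟩ := md_cover Y y
    exact ⟨Sum.inr ⟨⟨d, w⟩, c⟩, hc⟩
  · intro M hM v
    obtain ⟨d, φ, ψ, hφψ⟩ := fp_retract_md hM
    refine ⟨⟨fun m => Sum.inr ⟨⟨d, v.comp φ⟩, ψ.toFun m⟩, ?_⟩, ?_⟩
    · intro a s
      exact congrArg (fun z =>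
        (Sum.inr (⟨⟨d, v.comp φ⟩, z⟩ : Σ i, (evalFam Y i).carrier) :
          (X.coprod (SAct.sigmaCoprod (evalFam Y))).carrier)) (ψ.map_act a s)
    · apply smap_ext
      intro mm
      have h : φ.toFun (ψ.toFun mm) = mm := congrArg (fun k => SMap.toFun k mm) hφψ
      show v.toFun (φ.toFun (ψ.toFun mm)) = v.toFun mm
      rw [h]

theorem inl_uxclass (X : SAct S) {ι : Type u} (F : ι → SAct S) (hF : ∀ i, FinPresented (F i)) :
    UXClass (RIFPClass S) (inlM X (SAct.sigmaCoprod F)) := by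
  classical
  have hinj : Function.Injective (inlM X (SAct.sigmaCoprod F)).toFun :=
    fun a b h => Sum.inl.inj h
  have hu : ∀ (y : (X.coprod (SAct.sigmaCoprod F)).carrier) (s : S),
      (X.coprod (SAct.sigmaCoprod F)).act y s ∈ Set.range (inlM X (SAct.sigmaCoprod F)).toFun →
      y ∈ Set.range (inlM X (SAct.sigmaCoprod F)).toFun := by
    intro y s hy
    cases y with
    | inl x => exact ⟨x, rfl⟩
    | inr e =>
      obtain ⟨x, hx⟩ := hy
      exact absurd hx (by simp [SAct.coprod, inlM])
  refine ⟨hinj, hu, ι, F, hF, ?_⟩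
  have hex : ∀ t : ((X.coprod (SAct.sigmaCoprod F)).sub
      (Set.range (inlM X (SAct.sigmaCoprod F)).toFun)ᶜ
      (fun t ht s hmem => ht (hu t s hmem))).carrier,
      ∃ e : (SAct.sigmaCoprod F).carrier, t.1 = Sum.inr e := by
    rintro ⟨val, hmem⟩
    cases val with
    | inl x => exact absurd ⟨x, rfl⟩ hmem
    | inr e => exact ⟨e, rfl⟩
  refine ⟨⟨fun t => (hex t).choose, ?_⟩, ⟨fun e => ⟨Sum.inr e, fun ⟨x, hx⟩ => by
      exact Sum.inl_ne_inr hx⟩, fun e s => Subtype.ext rfl⟩, ?_⟩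
  · intro t s
    have h1 := (hex t).choose_spec
    set c := (hex t).choose with hc
    have h2 : ((X.coprod (SAct.sigmaCoprod F)).act t.1 s) =
        Sum.inr ((SAct.sigmaCoprod F).act c s) := by
      rw [h1]; rfl
    exact Sum.inr_injective (((hex _).choose_spec).symm.trans h2)
  · apply smap_ext
    intro t
    apply Subtype.ext
    show Sum.inr (hex t).choose = t.1
    exact ((hex t).choose_spec).symm

theorem factor_step {X Y : SAct S} (f : SMap X Y) :
    ∃ (Z : SAct S) (j : SMap X Z) (g : SMap Z Y),
      UXClass (RIFPClass S) j ∧ IsPureEpi g ∧ g.comp j = f := by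
  exact ⟨X.coprod (SAct.sigmaCoprod (evalFam Y)), inlM X _, pA f,
    inl_uxclass X (evalFam Y) (fun i => md_fp i.1), pA_pure f, smap_ext (fun x => rfl)⟩

end Aux13

section Aux13b

theorem ux_lifts_pure {X Y C D : SAct S} (f : SMap X Y) (hf : UXClass (RIFPClass S) f)
    (g : SMap C D) (hg : IsPureEpi g) : Lifts f g := by
  classical
  obtain ⟨hinj, hu, ι, F, hF, α, β, hβα⟩ := hf
  intro u v hsq
  have hsq' : ∀ x, g.toFun (u.toFun x) = v.toFun (f.toFun x) :=
    fun x => congrArg (fun k => SMap.toFun k x) hsq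
  have hk : ∀ i : ι, ∃ k : SMap (F i) C,
      ∀ m, g.toFun (k.toFun m) = v.toFun ((β.toFun ⟨i, m⟩).1) := by
    intro i
    obtain ⟨k, hk⟩ := hg.2 (F i) (hF i)
      ⟨fun m => v.toFun ((β.toFun ⟨i, m⟩).1), by
        intro m s
        have hb := β.map_act ⟨i, m⟩ s
        calc v.toFun ((β.toFun ⟨i, (F i).act m s⟩).1)
            = v.toFun ((β.toFun ((SAct.sigmaCoprod F).act ⟨i, m⟩ s)).1) := rfl
          _ = v.toFun (Y.act (β.toFun ⟨i, m⟩).1 s) := by rw [hb]; rfl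
          _ = D.act (v.toFun ((β.toFun ⟨i, m⟩).1)) s := v.map_act _ s⟩
    exact ⟨k, fun m => congrArg (fun kk => SMap.toFun kk m) hk⟩
  choose kk hkk using hk
  refine ⟨⟨fun y => if hy : y ∈ Set.range f.toFun then u.toFun (rangeInv f y hy)
      else (kk (α.toFun ⟨y, hy⟩).1).toFun (α.toFun ⟨y, hy⟩).2, ?_⟩, ?_, ?_⟩
  · intro y s
    by_cases hy : y ∈ Set.range f.toFun
    · have hys : Y.act y s ∈ Set.range f.toFun := range_act f y s hy
      simp only [dif_pos hy, dif_pos hys]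
      rw [rangeInv_act f hinj y s hy hys, u.map_act]
    · have hys : Y.act y s ∉ Set.range f.toFun := fun hmem => hy (hu y s hmem)
      simp only [dif_neg hy, dif_neg hys]
      have hα : α.toFun ⟨Y.act y s, hys⟩ = (SAct.sigmaCoprod F).act (α.toFun ⟨y, hy⟩) s :=
        α.map_act ⟨y, hy⟩ s
      rw [hα]
      exact (kk (α.toFun ⟨y, hy⟩).1).map_act (α.toFun ⟨y, hy⟩).2 s
  · apply smap_ext
    intro x
    show (if hy : f.toFun x ∈ Set.range f.toFun then u.toFun (rangeInv f (f.toFun x) hy)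
      else (kk (α.toFun ⟨f.toFun x, hy⟩).1).toFun (α.toFun ⟨f.toFun x, hy⟩).2) = u.toFun x
    rw [dif_pos (Set.mem_range_self x)]
    exact congrArg u.toFun (hinj (rangeInv_spec f (f.toFun x) (Set.mem_range_self x)))
  · apply smap_ext
    intro y
    show g.toFun (if hy : y ∈ Set.range f.toFun then u.toFun (rangeInv f y hy)
      else (kk (α.toFun ⟨y, hy⟩).1).toFun (α.toFun ⟨y, hy⟩).2) = v.toFun y
    by_cases hy : y ∈ Set.range f.toFun
    · rw [dif_pos hy, hsq' (rangeInv f y hy), rangeInv_spec]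
    · rw [dif_neg hy]
      have h1 := hkk (α.toFun ⟨y, hy⟩).1 (α.toFun ⟨y, hy⟩).2
      have h2 : (β.toFun (α.toFun ⟨y, hy⟩)) = ⟨y, hy⟩ :=
        congrFun (congrArg SMap.toFun hβα) ⟨y, hy⟩
      rw [h1]
      show v.toFun ((β.toFun (α.toFun ⟨y, hy⟩)).1) = v.toFun y
      rw [h2]

def emptyAct (S : Type u) [Monoid S] : SAct S :=
  ⟨PEmpty, fun a _ => a.elim, fun a => a.elim, fun a _ _ => a.elim⟩

def emptyTo (M : SAct S) : SMap (emptyAct S) M := ⟨fun a => a.elim, fun a _ => a.elim⟩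

theorem emptyTo_ux {M : SAct S} (hM : FinPresented M) :
    UXClass (RIFPClass S) (emptyTo M) := by
  have hinj : Function.Injective (emptyTo M).toFun := fun a => a.elim
  have hu : ∀ (y : M.carrier) (s : S), M.act y s ∈ Set.range (emptyTo M).toFun →
      y ∈ Set.range (emptyTo M).toFun := by
    rintro y s ⟨a, _⟩
    exact a.elim
  refine ⟨hinj, hu, PUnit.{u + 1}, fun _ => M, fun _ => hM, ?_, ?_, ?_⟩
  · exact ⟨fun t => ⟨PUnit.unit, t.1⟩, fun t s => rfl⟩
  · exact ⟨fun x => ⟨x.2, fun ⟨a, _⟩ => a.elim⟩, fun x s => rfl⟩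
  · apply smap_ext
    intro t
    exact Subtype.ext rfl

theorem rlp_to_pure {C D : SAct S} (g : SMap C D)
    (hg : rlpC (UXClass (RIFPClass S)) g) : IsPureEpi g := by
  have key : ∀ (M : SAct S), FinPresented M → ∀ v : SMap M D, ∃ h : SMap M C, g.comp h = v := by
    intro M hM v
    obtain ⟨h, _, hh⟩ := hg (emptyTo M) (emptyTo_ux hM) (emptyTo C) v
      (smap_ext (fun a => a.elim))
    exact ⟨h, hh⟩
  constructor
  · intro dd
    obtain ⟨d, w, c, hc⟩ := md_cover D dd
    obtain ⟨h, hh⟩ := key (Md d) (md_fp d) w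
    exact ⟨h.toFun c, by rw [← hc]; exact congrArg (fun k => SMap.toFun k c) hh⟩
  · exact key

end Aux13b

section Aux13c

theorem sub_finPresented {M : SAct S} (hM : FinPresented M) (T : Set M.carrier)
    (hT : ∀ t ∈ T, ∀ s, M.act t s ∈ T)
    (hC : ∀ t, t ∉ T → ∀ s : S, M.act t s ∉ T) :
    FinPresented (M.sub T hT) := by
  classical
  obtain ⟨n, q, hq, m, p, hrel, huniv⟩ := hM
  have key : ∀ (i : Fin n) (s : S), q.toFun (i, s) = M.act (q.toFun (i, 1)) s := by
    intro i s
    have h1 : ((i, s) : (freeAct S n).carrier) = (freeAct S n).act (i, 1) s := by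
      show (i, s) = (i, 1 * s)
      rw [one_mul]
    rw [h1]; exact q.map_act _ _
  have memI : ∀ x : (freeAct S n).carrier, q.toFun x ∈ T → q.toFun (x.1, 1) ∈ T := by
    intro x hx
    by_contra hni
    exact hC _ hni x.2 (by rw [← key]; exact hx)
  have memN : ∀ x : (freeAct S n).carrier, q.toFun x ∉ T → q.toFun (x.1, 1) ∉ T := by
    intro x hx hi
    exact hx (by rw [show (x : Fin n × S) = (x.1, x.2) from rfl, key]; exact hT _ hi x.2)
  let σ := {i : Fin n // q.toFun (i, 1) ∈ T}
  let k := Fintype.card σ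
  let e : Fin k ≃ σ := (Fintype.equivFin σ).symm
  let qT : SMap (freeAct S k) (M.sub T hT) :=
    ⟨fun x => ⟨M.act (q.toFun ((e x.1).1, 1)) x.2, hT _ (e x.1).2 x.2⟩,
     fun x s => Subtype.ext (M.act_mul _ x.2 s).symm⟩
  have hqT : Function.Surjective qT.toFun := by
    rintro ⟨tv, htv⟩
    obtain ⟨x, hx⟩ := hq tv
    have hi : q.toFun (x.1, 1) ∈ T := memI x (by rw [hx]; exact htv)
    refine ⟨(e.symm ⟨x.1, hi⟩, x.2), Subtype.ext ?_⟩
    show M.act (q.toFun ((e (e.symm ⟨x.1, hi⟩)).1, 1)) x.2 = tv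
    rw [e.apply_symm_apply]
    show M.act (q.toFun (x.1, 1)) x.2 = tv
    rw [← key]
    exact hx
  let σ' := {j : Fin m // q.toFun (p j).1 ∈ T}
  let m' := Fintype.card σ'
  let e' : Fin m' ≃ σ' := (Fintype.equivFin σ').symm
  let τ : (x : (freeAct S n).carrier) → q.toFun (x.1, 1) ∈ T → (freeAct S k).carrier :=
    fun x hx => (e.symm ⟨x.1, hx⟩, x.2)
  have mem1 : ∀ jj : σ', q.toFun ((p jj.1).1.1, 1) ∈ T := fun jj => memI _ jj.2
  have mem2 : ∀ jj : σ', q.toFun ((p jj.1).2.1, 1) ∈ T :=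
    fun jj => memI _ (by rw [← hrel jj.1]; exact jj.2)
  let τσ : σ' → (freeAct S k).carrier × (freeAct S k).carrier :=
    fun jj => (τ (p jj.1).1 (mem1 jj), τ (p jj.1).2 (mem2 jj))
  have hqTτ : ∀ (x : (freeAct S n).carrier) (hx : q.toFun (x.1, 1) ∈ T),
      (qT.toFun (τ x hx)).1 = q.toFun x := by
    intro x hx
    show M.act (q.toFun ((e (e.symm ⟨x.1, hx⟩)).1, 1)) x.2 = q.toFun x
    rw [e.apply_symm_apply]
    exact (key x.1 x.2).symm
  refine ⟨k, qT, hqT, m', fun j' => τσ (e' j'), ?_, ?_⟩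
  · intro j'
    apply Subtype.ext
    exact (hqTτ _ _).trans ((hrel (e' j').1).trans (hqTτ _ _).symm)
  · intro rT hrT hpair x y hxy
    have hall : ∀ a b : (freeAct S n).carrier, q.toFun a = q.toFun b →
        ((∃ (ha : q.toFun (a.1, 1) ∈ T) (hb : q.toFun (b.1, 1) ∈ T),
            rT (τ a ha) (τ b hb)) ∨
          (q.toFun (a.1, 1) ∉ T ∧ q.toFun (b.1, 1) ∉ T ∧ q.toFun a = q.toFun b)) := by
      refine huniv _ ⟨⟨?_, ?_, ?_⟩, ?_⟩ ?_
      · -- refl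
        intro a
        by_cases h : q.toFun (a.1, 1) ∈ T
        · exact Or.inl ⟨h, h, hrT.1.refl _⟩
        · exact Or.inr ⟨h, h, rfl⟩
      · -- symm
        rintro a b (⟨ha, hb, h⟩ | ⟨ha, hb, h⟩)
        · exact Or.inl ⟨hb, ha, hrT.1.symm h⟩
        · exact Or.inr ⟨hb, ha, h.symm⟩
      · -- trans
        rintro a b c (⟨ha, hb, h⟩ | ⟨ha, hb, h⟩) (⟨hb', hc, h'⟩ | ⟨hb', hc, h'⟩)
        · exact Or.inl ⟨ha, hc, hrT.1.trans h h'⟩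
        · exact absurd hb hb'
        · exact absurd hb' hb
        · exact Or.inr ⟨ha, hc, h.trans h'⟩
      · -- action
        rintro a b s (⟨ha, hb, h⟩ | ⟨ha, hb, h⟩)
        · exact Or.inl ⟨ha, hb, hrT.2 _ _ s h⟩
        · refine Or.inr ⟨ha, hb, ?_⟩
          rw [q.map_act, q.map_act, h]
      · -- contains the relations
        intro j
        by_cases hj : q.toFun (p j).1 ∈ T
        · have h0 : rT (τσ (e' (e'.symm ⟨j, hj⟩))).1 (τσ (e' (e'.symm ⟨j, hj⟩))).2 :=
            hpair (e'.symm ⟨j, hj⟩)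
          rw [show e' (e'.symm ⟨j, hj⟩) = ⟨j, hj⟩ from e'.apply_symm_apply _] at h0
          exact Or.inl ⟨mem1 ⟨j, hj⟩, mem2 ⟨j, hj⟩, h0⟩
        · have hj2 : q.toFun (p j).2 ∉ T := by rw [← hrel j]; exact hj
          exact Or.inr ⟨memN _ hj, memN _ hj2, hrel j⟩
    have hab : q.toFun ((e x.1).1, x.2) = q.toFun ((e y.1).1, y.2) :=
      (key ((e x.1).1) x.2).trans ((congrArg Subtype.val hxy).trans (key ((e y.1).1) y.2).symm)
    rcases hall ((e x.1).1, x.2) ((e y.1).1, y.2) hab with ⟨ha, hb, h⟩ | ⟨ha, _, _⟩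
    · have hx' : τ ((e x.1).1, x.2) ha = x := by
        show (e.symm ⟨(e x.1).1, ha⟩, x.2) = x
        rw [show (⟨(e x.1).1, ha⟩ : σ) = e x.1 from Subtype.ext rfl, e.symm_apply_apply]
        rfl
      have hy' : τ ((e y.1).1, y.2) hb = y := by
        show (e.symm ⟨(e y.1).1, hb⟩, y.2) = y
        rw [show (⟨(e y.1).1, hb⟩ : σ) = e y.1 from Subtype.ext rfl, e.symm_apply_apply]
        rfl
      rw [hx', hy'] at h
      exact h
    · exact absurd (e x.1).2 ha

end Aux13c

section Aux13d

def TActOf {X Y : SAct S} (f : SMap X Y)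
    (hcl : ∀ t ∈ (Set.range f.toFun)ᶜ, ∀ s : S, Y.act t s ∈ (Set.range f.toFun)ᶜ) : SAct S :=
  Y.sub (Set.range f.toFun)ᶜ hcl

def EBOf {X Y : SAct S} (f : SMap X Y)
    (hcl : ∀ t ∈ (Set.range f.toFun)ᶜ, ∀ s : S, Y.act t s ∈ (Set.range f.toFun)ᶜ) : SAct S :=
  SAct.sigmaCoprod (evalFam (TActOf f hcl))

def pB {X Y : SAct S} (f : SMap X Y)
    (hcl : ∀ t ∈ (Set.range f.toFun)ᶜ, ∀ s : S, Y.act t s ∈ (Set.range f.toFun)ᶜ) :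
    SMap (X.coprod (EBOf f hcl)) Y :=
  ⟨Sum.elim f.toFun (fun x => ((evalMap (TActOf f hcl)).toFun x).1), by
    intro a s
    cases a with
    | inl xx => exact f.map_act xx s
    | inr ee => exact congrArg Subtype.val ((evalMap (TActOf f hcl)).map_act ee s)⟩

theorem pB_pure {X Y : SAct S} (f : SMap X Y)
    (hcl : ∀ t ∈ (Set.range f.toFun)ᶜ, ∀ s : S, Y.act t s ∈ (Set.range f.toFun)ᶜ)
    (hinj : Function.Injective f.toFun)
    (hu : ∀ (y : Y.carrier) (s : S), Y.act y s ∈ Set.range f.toFun →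
      y ∈ Set.range f.toFun) :
    IsPureEpi (pB f hcl) := by
  classical
  constructor
  · intro y
    by_cases hy : y ∈ Set.range f.toFun
    · obtain ⟨x, hx⟩ := hy
      exact ⟨Sum.inl x, hx⟩
    · obtain ⟨d, w, c, hc⟩ := md_cover (TActOf f hcl) ⟨y, hy⟩
      exact ⟨Sum.inr ⟨⟨d, w⟩, c⟩, congrArg Subtype.val hc⟩
  · intro M hM v
    obtain ⟨d, φ, ψ, hφψ⟩ := fp_retract_md hM
    have hT' : ∀ t ∈ ({mm | (v.comp φ).toFun mm ∈ Set.range f.toFun}ᶜ : Set (Md d).carrier),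
        ∀ s : S, (Md d).act t s ∈
          ({mm | (v.comp φ).toFun mm ∈ Set.range f.toFun}ᶜ : Set (Md d).carrier) := by
      intro t ht s hmem
      refine ht ?_
      have h3 : (v.comp φ).toFun ((Md d).act t s) ∈ Set.range f.toFun := hmem
      rw [(v.comp φ).map_act] at h3
      exact hu _ s h3
    have hC' : ∀ t ∉ ({mm | (v.comp φ).toFun mm ∈ Set.range f.toFun}ᶜ : Set (Md d).carrier),
        ∀ s : S, (Md d).act t s ∉
          ({mm | (v.comp φ).toFun mm ∈ Set.range f.toFun}ᶜ : Set (Md d).carrier) := by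
      intro t ht s hmem
      have h2 : (v.comp φ).toFun t ∈ Set.range f.toFun := by
        by_contra hh
        exact ht hh
      apply hmem
      show (v.comp φ).toFun ((Md d).act t s) ∈ Set.range f.toFun
      rw [(v.comp φ).map_act]
      exact range_act f _ s h2
    have hfp' := sub_finPresented (md_fp d) _ hT' hC'
    obtain ⟨d', φ', ψ', hφψ'⟩ := fp_retract_md hfp'
    let qT : SMap ((Md d).sub ({mm | (v.comp φ).toFun mm ∈ Set.range f.toFun}ᶜ) hT')
        (TActOf f hcl) :=
      ⟨fun mm => ⟨(v.comp φ).toFun mm.1, mm.2⟩,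
        fun mm s => Subtype.ext ((v.comp φ).map_act mm.1 s)⟩
    refine ⟨SMap.comp ⟨fun mm =>
      (if hmm : (v.comp φ).toFun mm ∈ Set.range f.toFun then Sum.inl (rangeInv f _ hmm)
      else Sum.inr ⟨⟨d', qT.comp φ'⟩, ψ'.toFun ⟨mm, hmm⟩⟩ : X.carrier ⊕ (EBOf f hcl).carrier), ?_⟩ ψ, ?_⟩
    · intro mm s
      by_cases hmm : (v.comp φ).toFun mm ∈ Set.range f.toFun
      · have hms : (v.comp φ).toFun ((Md d).act mm s) ∈ Set.range f.toFun := by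
          rw [(v.comp φ).map_act]
          exact range_act f _ s hmm
        simp only [dif_pos hmm, dif_pos hms]
        have h4 : rangeInv f ((v.comp φ).toFun ((Md d).act mm s)) hms
            = X.act (rangeInv f ((v.comp φ).toFun mm) hmm) s := by
          apply hinj
          rw [rangeInv_spec, f.map_act, rangeInv_spec]
          exact (v.comp φ).map_act mm s
        rw [h4]
        rfl
      · have hms : (v.comp φ).toFun ((Md d).act mm s) ∉ Set.range f.toFun := by
          intro h
          rw [(v.comp φ).map_act] at h
          exact hmm (hu _ s h)
        simp only [dif_neg hmm, dif_neg hms]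
        exact congrArg (fun z =>
          (Sum.inr (⟨⟨d', qT.comp φ'⟩, z⟩ : (EBOf f hcl).carrier) :
            (X.coprod (EBOf f hcl)).carrier)) (ψ'.map_act ⟨mm, hmm⟩ s)
    · apply smap_ext
      intro mm
      have hmid : φ.toFun (ψ.toFun mm) = mm := congrFun (congrArg SMap.toFun hφψ) mm
      by_cases hmm : (v.comp φ).toFun (ψ.toFun mm) ∈ Set.range f.toFun
      · show (pB f hcl).toFun (if hmm' : (v.comp φ).toFun (ψ.toFun mm) ∈ Set.range f.toFun
          then Sum.inl (rangeInv f _ hmm')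
          else Sum.inr ⟨⟨d', qT.comp φ'⟩, ψ'.toFun ⟨ψ.toFun mm, hmm'⟩⟩ : X.carrier ⊕ (EBOf f hcl).carrier) = v.toFun mm
        rw [dif_pos hmm]
        show f.toFun (rangeInv f _ hmm) = v.toFun mm
        rw [rangeInv_spec]
        show v.toFun (φ.toFun (ψ.toFun mm)) = v.toFun mm
        rw [hmid]
      · show (pB f hcl).toFun (if hmm' : (v.comp φ).toFun (ψ.toFun mm) ∈ Set.range f.toFun
          then Sum.inl (rangeInv f _ hmm')
          else Sum.inr ⟨⟨d', qT.comp φ'⟩, ψ'.toFun ⟨ψ.toFun mm, hmm'⟩⟩ : X.carrier ⊕ (EBOf f hcl).carrier) = v.toFun mm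
        rw [dif_neg hmm]
        have hz : φ'.toFun (ψ'.toFun ⟨ψ.toFun mm, hmm⟩) = ⟨ψ.toFun mm, hmm⟩ :=
          congrFun (congrArg SMap.toFun hφψ') _
        show (qT.toFun (φ'.toFun (ψ'.toFun ⟨ψ.toFun mm, hmm⟩))).1 = v.toFun mm
        rw [hz]
        show v.toFun (φ.toFun (ψ.toFun mm)) = v.toFun mm
        rw [hmid]

theorem llp_to_ux {X Y : SAct S} (f : SMap X Y) (hf : llpC (PureEpiClass S) f) :
    UXClass (RIFPClass S) f := by
  classical
  obtain ⟨h1, hj1, hg1⟩ := hf (pA f) (pA_pure f) (inlM X (SAct.sigmaCoprod (evalFam Y)))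
    (SMap.id Y) (smap_ext fun x => rfl)
  have hj1' : ∀ x, h1.toFun (f.toFun x) = Sum.inl x :=
    fun x => congrFun (congrArg SMap.toFun hj1) x
  have hg1' : ∀ y, (pA f).toFun (h1.toFun y) = y :=
    fun y => congrFun (congrArg SMap.toFun hg1) y
  have hinj : Function.Injective f.toFun := by
    intro a b hab
    have h5 : (Sum.inl a : (X.coprod (SAct.sigmaCoprod (evalFam Y))).carrier) = Sum.inl b :=
      (hj1' a).symm.trans (by rw [hab]; exact hj1' b)
    exact Sum.inl_injective h5
  have hu : ∀ (y : Y.carrier) (s : S), Y.act y s ∈ Set.range f.toFun →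
      y ∈ Set.range f.toFun := by
    intro y s hmem
    obtain ⟨x, hx⟩ := hmem
    cases hcase : h1.toFun y with
    | inl a =>
      refine ⟨a, ?_⟩
      have h6 := hg1' y
      rw [hcase] at h6
      exact h6
    | inr ee =>
      exfalso
      have hys : h1.toFun (Y.act y s) = Sum.inl x := by rw [← hx, hj1']
      rw [h1.map_act, hcase] at hys
      exact Sum.inr_ne_inl hys
  refine ⟨hinj, hu, ?_⟩
  set hcl := (fun t ht s hmem => ht (hu t s hmem) :
    ∀ t ∈ (Set.range f.toFun)ᶜ, ∀ s : S, Y.act t s ∈ (Set.range f.toFun)ᶜ) with hhcl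
  obtain ⟨h2, hj2, hg2⟩ := hf (pB f hcl) (pB_pure f hcl hinj hu) (inlM X (EBOf f hcl))
    (SMap.id Y) (smap_ext fun x => rfl)
  have hg2' : ∀ y, (pB f hcl).toFun (h2.toFun y) = y :=
    fun y => congrFun (congrArg SMap.toFun hg2) y
  have hex : ∀ t : (TActOf f hcl).carrier,
      ∃ ee : (EBOf f hcl).carrier, h2.toFun t.1 = Sum.inr ee := by
    intro t
    cases hcase : h2.toFun t.1 with
    | inl a =>
      exfalso
      apply t.2
      refine ⟨a, ?_⟩
      have h6 := hg2' t.1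
      rw [hcase] at h6
      exact h6
    | inr ee => exact ⟨ee, rfl⟩
  refine ⟨evalIdx (TActOf f hcl), evalFam (TActOf f hcl), fun i => md_fp i.1,
    ⟨fun t => (hex t).choose, ?_⟩, evalMap (TActOf f hcl), ?_⟩
  · intro t s
    have h1' := (hex t).choose_spec
    set c := (hex t).choose with hc
    have hstep : h2.toFun (Y.act t.1 s) = Sum.inr ((EBOf f hcl).act c s) := by
      rw [h2.map_act, h1']
      rfl
    exact Sum.inr_injective (((hex _).choose_spec).symm.trans hstep)
  · apply smap_ext
    intro t
    apply Subtype.ext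
    show ((evalMap (TActOf f hcl)).toFun (hex t).choose).1 = t.1
    have h1' := (hex t).choose_spec
    have h6 := hg2' t.1
    rw [h1'] at h6
    exact h6

end Aux13d

theorem statement13 :
    IsWFS (UXClass (RIFPClass S)) (PureEpiClass S) := by
  constructor
  · intro A B g
    constructor
    · intro hg X Y f hfx
      exact ux_lifts_pure f hfx g hg
    · intro hg
      exact rlp_to_pure g hg
  · intro A B f
    constructor
    · intro hfx C' D g hg
      exact ux_lifts_pure f hfx g hg
    · intro hllp
      exact llp_to_ux f hllp
  · intro A B h
    obtain ⟨Z, j, g, hj, hg, hc⟩ := factor_step h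
    exact ⟨Z, j, g, hj, hg, hc⟩
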